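/- The XXZ R-matrix satisfies the crossing relation: the partial transpose of R(−v) on the second factor equals (sinh(v)/sinh(v−η)) · (σ^y ⊗ 1) R(v−η) (σ^y ⊗ 1), where the partial transpose is taken in the second tensor factor and σ^y acts on the first factor. Equivalently in index form, R_{k,0}^{t_k}(−v) = (sinh(v)/sinh(v−η)) σ^y_k R_{0,k}(v−η) σ^y_k. -/
import Mathlib


/-- The XXZ R-matrix on `ℂ² ⊗ ℂ²`. -/
noncomputable def Rxxz (η u : ℂ) : Matrix (Fin 2 × Fin 2) (Fin 2 × Fin 2) ℂ :=
  Matrix.of fun p q =>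
    if p = q then
      (if p.1 = p.2 then 1 else Complex.sinh u / Complex.sinh (u + η))
    else if p.1 = q.2 ∧ p.2 = q.1 ∧ p.1 ≠ p.2 then
      Complex.sinh η / Complex.sinh (u + η)
    else 0

/-- Pauli matrix σ^y. -/
noncomputable def sigmaY : Matrix (Fin 2) (Fin 2) ℂ :=
  !![0, -Complex.I; Complex.I, 0]

/-- σ^y acting on the first tensor factor of `ℂ² ⊗ ℂ²`. -/
noncomputable def sigmaY1 : Matrix (Fin 2 × Fin 2) (Fin 2 × Fin 2) ℂ :=
  Matrix.of fun p q => sigmaY p.1 q.1 * (if p.2 = q.2 then 1 else 0)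

/-- Partial transpose in the second tensor factor. -/
def ptranspose2 (M : Matrix (Fin 2 × Fin 2) (Fin 2 × Fin 2) ℂ) :
    Matrix (Fin 2 × Fin 2) (Fin 2 × Fin 2) ℂ :=
  Matrix.of fun p q => M (p.1, q.2) (q.1, p.2)

set_option maxHeartbeats 2000000 in
/-- Crossing relation for the XXZ R-matrix:
`R(-v)^{t₂} = (sinh v / sinh (v-η)) (σ^y ⊗ 1) R(v-η) (σ^y ⊗ 1)`. -/
theorem crossing (η v : ℂ)
    (h1 : Complex.sinh (-v + η) ≠ 0)
    (h2 : Complex.sinh (v - η) ≠ 0)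
    (h3 : Complex.sinh v ≠ 0) :
    ptranspose2 (Rxxz η (-v)) =
      (Complex.sinh v / Complex.sinh (v - η)) •
        (sigmaY1 * Rxxz η (v - η) * sigmaY1) := by
  have key : Complex.sinh (-v + η) = -Complex.sinh (v - η) := by
    rw [← Complex.sinh_neg]; ring_nf
  have hvη : v - η + η = v := by ring
  ext ⟨a, b⟩ ⟨c, d⟩
  fin_cases a <;> fin_cases b <;> fin_cases c <;> fin_cases d <;>
    simp [ptranspose2, Rxxz, sigmaY1, sigmaY, Matrix.mul_apply, Fintype.sum_prod_type, Fin.sum_univ_two,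
      Matrix.smul_apply, key, hvη, Complex.sinh_neg, Prod.ext_iff] <;>
    field_simp <;> ring_nf <;> simp [Complex.I_sq] <;> field_simp <;> ring
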